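/- Let g, h be holomorphic functions on the unit disk 𝔻 and let f = g + conj(h). At every point z ∈ 𝔻 where f(z) ≠ 0, the Laplacian of |f| satisfies Δ|f|(z) = |g'(z) − (f(z)/conj(f(z)))·h'(z)|² / |f(z)|. -/

import Mathlib

open Complex Metric MeasureTheory
open Filter Topology

/-- The planar Laplacian `Δw = ∂²w/∂x² + ∂²w/∂y²` of a function `w : ℂ → ℝ`. -/
noncomputable def lap2 (w : ℂ → ℝ) (z : ℂ) : ℝ :=
  iteratedFDeriv ℝ 2 w z ![1, 1] + iteratedFDeriv ℝ 2 w z ![Complex.I, Complex.I]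

noncomputable def rmul : ℂ →L[ℝ] ℂ →L[ℝ] ℝ :=
  (ContinuousLinearMap.compL ℝ ℂ ℂ ℝ Complex.reCLM).comp (ContinuousLinearMap.mul ℝ ℂ)

@[simp] lemma rmul_apply (c v : ℂ) : rmul c v = (c * v).re := rfl

lemma sqrt_step (a b : ℂ → ℝ) (α β : ℂ) (w : ℂ)
    {da db : ℂ →L[ℝ] ℝ}
    (hda : HasFDerivAt a da w) (hdb : HasFDerivAt b db w)
    (hdav : ∀ v, da v = (v * α).re + (v * β).re)
    (hdbv : ∀ v, db v = (v * α).im - (v * β).im)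
    (hne : a w ^ 2 + b w ^ 2 ≠ 0) :
    HasFDerivAt (fun w => Real.sqrt (a w ^ 2 + b w ^ 2))
      (rmul ((((a w : ℂ) - (b w : ℂ) * Complex.I) * α +
              ((a w : ℂ) + (b w : ℂ) * Complex.I) * β) *
             ((Real.sqrt (a w ^ 2 + b w ^ 2) : ℝ) : ℂ)⁻¹)) w := by
  have heq : (fun w => a w ^ 2 + b w ^ 2) = fun w => a w * a w + b w * b w := by
    funext x; ring
  have hq : HasFDerivAt (fun w => a w ^ 2 + b w ^ 2)
      ((a w • da + a w • da) + (b w • db + b w • db)) w := by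
    rw [heq]; exact (hda.mul hda).add (hdb.mul hdb)
  have hk : Real.sqrt (a w ^ 2 + b w ^ 2) ≠ 0 := by
    positivity
  have h2 := (Real.hasDerivAt_sqrt hne).comp_hasFDerivAt w hq
  refine h2.congr_fderiv (Eq.symm ?_)
  have hksq : Real.sqrt (a w ^ 2 + b w ^ 2) ^ 2 = a w ^ 2 + b w ^ 2 :=
    Real.sq_sqrt (by positivity)
  ext v
  simp [hdav, hdbv, Complex.div_re, Complex.mul_re, Complex.mul_im,
    Complex.normSq_apply, smul_eq_mul]
  field_simp
  nlinarith [hksq, sq_nonneg (Real.sqrt (a w ^ 2 + b w ^ 2)), hda, hdb]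

lemma p_step (a b u : ℂ → ℝ) (G H : ℂ → ℂ) (z : ℂ)
    {da db du : ℂ →L[ℝ] ℝ} {dG dH : ℂ →L[ℝ] ℂ}
    (hda : HasFDerivAt a da z) (hdb : HasFDerivAt b db z)
    (hdu : HasFDerivAt u du z)
    (hG : HasFDerivAt G dG z) (hH : HasFDerivAt H dH z)
    (hu0 : u z ≠ 0) :
    ∃ P : ℂ →L[ℝ] ℂ,
      HasFDerivAt (fun w =>
        (((a w : ℂ) - (b w : ℂ) * Complex.I) * G w +
         ((a w : ℂ) + (b w : ℂ) * Complex.I) * H w) * ((u w : ℝ) : ℂ)⁻¹) P z ∧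
      ∀ v, P v =
        (((da v : ℂ) - (db v : ℂ) * Complex.I) * G z +
         ((a z : ℂ) - (b z : ℂ) * Complex.I) * dG v +
         ((da v : ℂ) + (db v : ℂ) * Complex.I) * H z +
         ((a z : ℂ) + (b z : ℂ) * Complex.I) * dH v) * ((u z : ℝ) : ℂ)⁻¹ -
        (((a z : ℂ) - (b z : ℂ) * Complex.I) * G z +
         ((a z : ℂ) + (b z : ℂ) * Complex.I) * H z) *
          (du v : ℂ) * (((u z : ℝ) : ℂ)⁻¹) ^ 2 := by
  have hA : HasFDerivAt (fun w => ((a w : ℝ) : ℂ)) (Complex.ofRealCLM.comp da) z :=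
    Complex.ofRealCLM.hasFDerivAt.comp z hda
  have hB : HasFDerivAt (fun w => ((b w : ℝ) : ℂ)) (Complex.ofRealCLM.comp db) z :=
    Complex.ofRealCLM.hasFDerivAt.comp z hdb
  have hU : HasFDerivAt (fun w => ((u w : ℝ) : ℂ)) (Complex.ofRealCLM.comp du) z :=
    Complex.ofRealCLM.hasFDerivAt.comp z hdu
  have hBI := hB.mul_const Complex.I
  have hC1 := hA.sub hBI
  have hC2 := hA.add hBI
  have hM := (hC1.mul hG).add (hC2.mul hH)
  have hUinv : HasFDerivAt (fun w => (((u w : ℝ) : ℂ))⁻¹)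
      ((-ContinuousLinearMap.mulLeftRight ℝ ℂ (((u z : ℝ) : ℂ))⁻¹ (((u z : ℝ) : ℂ))⁻¹).comp
        (Complex.ofRealCLM.comp du)) z := by
    exact (hasFDerivAt_inv' (by exact_mod_cast hu0)).comp z hU
  have hp := hM.mul hUinv
  refine ⟨_, hp, fun v => ?_⟩
  simp [ContinuousLinearMap.smul_apply, ContinuousLinearMap.add_apply,
    ContinuousLinearMap.comp_apply, ContinuousLinearMap.sub_apply,
    ContinuousLinearMap.smulRight_apply, ContinuousLinearMap.mulLeftRight_apply,
    smul_eq_mul]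
  field_simp
  ring

lemma final_algebra (A B k : ℝ) (α β γ δ : ℂ) (da db du : ℂ → ℝ) (dG dH : ℂ → ℂ)
    (hk : 0 < k) (hk2 : k ^ 2 = A ^ 2 + B ^ 2)
    (hda : ∀ v, da v = (v * α).re + (v * β).re)
    (hdb : ∀ v, db v = (v * α).im - (v * β).im)
    (hdu : ∀ v, du v =
      ((((A : ℂ) - (B : ℂ) * I) * α + ((A : ℂ) + (B : ℂ) * I) * β) * ((k : ℝ) : ℂ)⁻¹ * v).re)
    (hdG : ∀ v, dG v = v * γ) (hdH : ∀ v, dH v = v * δ) :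
    ((((((da 1 : ℝ) : ℂ) - ((db 1 : ℝ) : ℂ) * I) * α +
      ((A : ℂ) - (B : ℂ) * I) * dG 1 +
      (((da 1 : ℝ) : ℂ) + ((db 1 : ℝ) : ℂ) * I) * β +
      ((A : ℂ) + (B : ℂ) * I) * dH 1) * ((k : ℝ) : ℂ)⁻¹ -
     (((A : ℂ) - (B : ℂ) * I) * α + ((A : ℂ) + (B : ℂ) * I) * β) *
       ((du 1 : ℝ) : ℂ) * (((k : ℝ) : ℂ)⁻¹) ^ 2) * 1).re +
    ((((((da I : ℝ) : ℂ) - ((db I : ℝ) : ℂ) * I) * α +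
      ((A : ℂ) - (B : ℂ) * I) * dG I +
      (((da I : ℝ) : ℂ) + ((db I : ℝ) : ℂ) * I) * β +
      ((A : ℂ) + (B : ℂ) * I) * dH I) * ((k : ℝ) : ℂ)⁻¹ -
     (((A : ℂ) - (B : ℂ) * I) * α + ((A : ℂ) + (B : ℂ) * I) * β) *
       ((du I : ℝ) : ℂ) * (((k : ℝ) : ℂ)⁻¹) ^ 2) * I).re =
    Complex.normSq (((A : ℂ) - (B : ℂ) * I) * α - ((A : ℂ) + (B : ℂ) * I) * β) / k ^ 3 := by
  have hk0 : k ≠ 0 := ne_of_gt hk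
  rw [hda 1, hda I, hdb 1, hdb I, hdu 1, hdu I, hdG 1, hdG I, hdH 1, hdH I]
  simp only [← Complex.ofReal_inv, ← Complex.ofReal_pow]
  simp only [Complex.normSq_apply, Complex.mul_re,
    Complex.mul_im, Complex.sub_re, Complex.sub_im, Complex.add_re, Complex.add_im,
    Complex.one_re, Complex.one_im, Complex.I_re, Complex.I_im, Complex.ofReal_re,
    Complex.ofReal_im, Complex.inv_re, Complex.inv_im, Complex.normSq_apply]
  field_simp [hk0]
  ring_nf
  simp only [show k ^ 8 = (A^2+B^2)^4 by rw [show k^8 = (k^2)^4 by ring, hk2],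
    show k ^ 6 = (A^2+B^2)^3 by rw [show k^6 = (k^2)^3 by ring, hk2],
    show k ^ 4 = (A^2+B^2)^2 by rw [show k^4 = (k^2)^2 by ring, hk2],
    show k ^ 7 = k * (A^2+B^2)^3 by rw [show k^7 = k * (k^2)^3 by ring, hk2],
    show k ^ 5 = k * (A^2+B^2)^2 by rw [show k^5 = k * (k^2)^2 by ring, hk2],
    show k ^ 3 = k * (A^2+B^2) by rw [show k^3 = k * k^2 by ring, hk2],
    hk2]
  ring

lemma bridge (A B k : ℝ) (α β : ℂ) (hk : 0 < k) (hk2 : k ^ 2 = A ^ 2 + B ^ 2) :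
    ‖α - ((A : ℂ) + (B : ℂ) * I) / ((A : ℂ) - (B : ℂ) * I) * β‖ ^ 2 / k
      = Complex.normSq (((A : ℂ) - (B : ℂ) * I) * α - ((A : ℂ) + (B : ℂ) * I) * β) / k ^ 3 := by
  have hns : Complex.normSq ((A : ℂ) - (B : ℂ) * I) = k ^ 2 := by
    simp only [Complex.normSq_apply, Complex.sub_re, Complex.sub_im, Complex.mul_re,
      Complex.mul_im, Complex.ofReal_re, Complex.ofReal_im, Complex.I_re, Complex.I_im]
    rw [hk2]; ring
  have hc : ((A : ℂ) - (B : ℂ) * I) ≠ 0 := by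
    intro hc0
    rw [hc0, map_zero] at hns
    nlinarith
  have hshow : α - ((A : ℂ) + (B : ℂ) * I) / ((A : ℂ) - (B : ℂ) * I) * β =
      (((A : ℂ) - (B : ℂ) * I) * α - ((A : ℂ) + (B : ℂ) * I) * β) / ((A : ℂ) - (B : ℂ) * I) := by
    field_simp
  rw [Complex.sq_norm, hshow, Complex.normSq_div, hns]
  have hk0 : k ≠ 0 := ne_of_gt hk
  rw [div_div, div_eq_div_iff (by positivity) (by positivity)]
  ring

/-- For a harmonic mapping `f = g + conj h` with `g, h` holomorphic on the unit disk,
at every point where `f ≠ 0` one has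
`Δ|f| = |g' − (f / conj f) h'|² / |f|`. -/
theorem laplacian_abs_formula (g h f : ℂ → ℂ)
    (hg : DifferentiableOn ℂ g (ball (0:ℂ) 1))
    (hh : DifferentiableOn ℂ h (ball (0:ℂ) 1))
    (hf : ∀ z ∈ ball (0:ℂ) 1, f z = g z + (starRingEnd ℂ) (h z)) :
    ∀ z ∈ ball (0:ℂ) 1, f z ≠ 0 →
      lap2 (fun w => ‖f w‖) z =
        (‖deriv g z - f z / (starRingEnd ℂ) (f z) * deriv h z‖) ^ 2 /
          ‖f z‖ := by
  intro z hz hz0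
  have hso : IsOpen (ball (0:ℂ) 1) := isOpen_ball
  set a : ℂ → ℝ := fun w => (g w).re + (h w).re with hadef
  set b : ℂ → ℝ := fun w => (g w).im - (h w).im with hbdef
  have hga := hg.analyticOnNhd hso
  have hha := hh.analyticOnNhd hso
  have habs : ∀ w ∈ ball (0:ℂ) 1, ‖f w‖ = Real.sqrt (a w ^ 2 + b w ^ 2) := by
    intro w hw
    rw [hf w hw, Complex.norm_def, Complex.normSq_apply]
    simp [hadef, hbdef]
    ring_nf
  have hgd : ∀ w ∈ ball (0:ℂ) 1, HasFDerivAt g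
      (((1 : ℂ →L[ℂ] ℂ).smulRight (deriv g w)).restrictScalars ℝ) w := by
    intro w hw
    exact ((hga w hw).differentiableAt.hasDerivAt.hasFDerivAt).restrictScalars ℝ
  have hhd : ∀ w ∈ ball (0:ℂ) 1, HasFDerivAt h
      (((1 : ℂ →L[ℂ] ℂ).smulRight (deriv h w)).restrictScalars ℝ) w := by
    intro w hw
    exact ((hha w hw).differentiableAt.hasDerivAt.hasFDerivAt).restrictScalars ℝ
  have had : ∀ w ∈ ball (0:ℂ) 1, HasFDerivAt a
      (Complex.reCLM.comp (((1 : ℂ →L[ℂ] ℂ).smulRight (deriv g w)).restrictScalars ℝ) +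
       Complex.reCLM.comp (((1 : ℂ →L[ℂ] ℂ).smulRight (deriv h w)).restrictScalars ℝ)) w := by
    intro w hw
    exact (Complex.reCLM.hasFDerivAt.comp w (hgd w hw)).add
      (Complex.reCLM.hasFDerivAt.comp w (hhd w hw))
  have hbd : ∀ w ∈ ball (0:ℂ) 1, HasFDerivAt b
      (Complex.imCLM.comp (((1 : ℂ →L[ℂ] ℂ).smulRight (deriv g w)).restrictScalars ℝ) -
       Complex.imCLM.comp (((1 : ℂ →L[ℂ] ℂ).smulRight (deriv h w)).restrictScalars ℝ)) w := by
    intro w hw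
    exact (Complex.imCLM.hasFDerivAt.comp w (hgd w hw)).sub
      (Complex.imCLM.hasFDerivAt.comp w (hhd w hw))
  -- evaluation lemmas for the component derivatives
  have hdav : ∀ w, ∀ v : ℂ,
      (Complex.reCLM.comp (((1 : ℂ →L[ℂ] ℂ).smulRight (deriv g w)).restrictScalars ℝ) +
       Complex.reCLM.comp (((1 : ℂ →L[ℂ] ℂ).smulRight (deriv h w)).restrictScalars ℝ)) v =
      (v * deriv g w).re + (v * deriv h w).re := by
    intro w v
    simp [smul_eq_mul]
  have hdbv : ∀ w, ∀ v : ℂ,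
      (Complex.imCLM.comp (((1 : ℂ →L[ℂ] ℂ).smulRight (deriv g w)).restrictScalars ℝ) -
       Complex.imCLM.comp (((1 : ℂ →L[ℂ] ℂ).smulRight (deriv h w)).restrictScalars ℝ)) v =
      (v * deriv g w).im - (v * deriv h w).im := by
    intro w v
    simp [smul_eq_mul]
  -- the first derivative of |f|
  set p : ℂ → ℂ := fun w =>
    (((a w : ℂ) - (b w : ℂ) * Complex.I) * deriv g w +
     ((a w : ℂ) + (b w : ℂ) * Complex.I) * deriv h w) *
      ((Real.sqrt (a w ^ 2 + b w ^ 2) : ℝ) : ℂ)⁻¹ with hpdef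
  have hud : ∀ w ∈ ball (0:ℂ) 1, a w ^ 2 + b w ^ 2 ≠ 0 →
      HasFDerivAt (fun w => Real.sqrt (a w ^ 2 + b w ^ 2)) (rmul (p w)) w := by
    intro w hw hne
    exact sqrt_step a b (deriv g w) (deriv h w) w (had w hw) (hbd w hw)
      (hdav w) (hdbv w) hne
  -- the set where things are nice
  have hq0 : a z ^ 2 + b z ^ 2 ≠ 0 := by
    intro hc
    apply hz0
    have := habs z hz
    rw [hc] at this
    have h2 : ‖f z‖ = 0 := by rw [this, Real.sqrt_eq_zero'] <;> simp
    exact norm_eq_zero.mp h2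
  -- nonvanishing near z
  have hqpos : 0 < a z ^ 2 + b z ^ 2 := lt_of_le_of_ne (by positivity) (Ne.symm hq0)
  have hk : 0 < Real.sqrt (a z ^ 2 + b z ^ 2) := Real.sqrt_pos.mpr hqpos
  have hk2 : Real.sqrt (a z ^ 2 + b z ^ 2) ^ 2 = a z ^ 2 + b z ^ 2 :=
    Real.sq_sqrt (le_of_lt hqpos)
  have ht : ∀ᶠ w in 𝓝 z, w ∈ ball (0:ℂ) 1 ∧ a w ^ 2 + b w ^ 2 ≠ 0 := by
    have h1 : ∀ᶠ w in 𝓝 z, w ∈ ball (0:ℂ) 1 := hso.mem_nhds hz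
    have hca : ContinuousAt (fun w => a w ^ 2 + b w ^ 2) z :=
      ((had z hz).differentiableAt.continuousAt.pow 2).add
        ((hbd z hz).differentiableAt.continuousAt.pow 2)
    exact h1.and (hca.eventually_ne hq0)
  have hev : fderiv ℝ (fun w => ‖f w‖) =ᶠ[𝓝 z] fun w => rmul (p w) := by
    filter_upwards [ht] with w hw
    have h1 : (fun x => ‖f x‖) =ᶠ[𝓝 w]
        (fun x => Real.sqrt (a x ^ 2 + b x ^ 2)) := by
      filter_upwards [hso.mem_nhds hw.1] with x hx using habs x hx
    rw [h1.fderiv_eq, (hud w hw.1 hw.2).fderiv]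
  obtain ⟨P, hP, hPv⟩ := p_step a b (fun w => Real.sqrt (a w ^ 2 + b w ^ 2))
    (deriv g) (deriv h) z
    (had z hz) (hbd z hz) (hud z hz hq0)
    (((hga.deriv z hz).differentiableAt.hasDerivAt.hasFDerivAt).restrictScalars ℝ)
    (((hha.deriv z hz).differentiableAt.hasDerivAt.hasFDerivAt).restrictScalars ℝ)
    (ne_of_gt hk)
  have hp2 : HasFDerivAt (fun w => rmul (p w)) (rmul.comp P) z := by
    rw [hpdef]
    exact rmul.hasFDerivAt.comp z hP
  have e2 : fderiv ℝ (fderiv ℝ (fun w => ‖f w‖)) z = rmul.comp P := by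
    rw [hev.fderiv_eq]
    exact hp2.fderiv
  have hkabs : ‖f z‖ = Real.sqrt (a z ^ 2 + b z ^ 2) := habs z hz
  have hfz : f z = (a z : ℂ) + (b z : ℂ) * Complex.I := by
    rw [hf z hz]; apply Complex.ext <;> simp [hadef, hbdef, sub_eq_add_neg]
  unfold lap2
  rw [iteratedFDeriv_two_apply, iteratedFDeriv_two_apply]
  simp only [Matrix.cons_val_zero, Matrix.cons_val_one, Matrix.head_cons]
  rw [e2]
  simp only [ContinuousLinearMap.comp_apply, rmul_apply]
  rw [hPv 1, hPv Complex.I]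
  rw [hkabs, hfz,
    show (starRingEnd ℂ) ((a z : ℂ) + (b z : ℂ) * Complex.I) =
        (a z : ℂ) - (b z : ℂ) * Complex.I by apply Complex.ext <;> simp,
    bridge (a z) (b z) (Real.sqrt (a z ^ 2 + b z ^ 2)) (deriv g z) (deriv h z) hk hk2]
  exact final_algebra (a z) (b z) (Real.sqrt (a z ^ 2 + b z ^ 2))
    (deriv g z) (deriv h z) (deriv (deriv g) z) (deriv (deriv h) z)
    _ _ _ _ _ hk hk2 (hdav z) (hdbv z)
    (by intro v; simp only [hpdef, rmul_apply])
    (by intro v; simp [smul_eq_mul]) (by intro v; simp [smul_eq_mul])
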